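/- For any quasiYamanouchi genomic tableau U of shape λ, the generating function of the regularization fiber over U equals the fundamental quasisymmetric function indexed by wt(U): Σ_{V ∈ Gen(λ), reg(V) = U} x^{wt(V)} = F_{wt(U)}. -/

import Mathlib

open scoped Classical

/-- The cell `x = (row, column)` (0-indexed, English orientation) lies in the Young diagram
whose `r`-th row has length `lam r`. -/
def InShape (lam : ℕ → ℕ) (x : ℕ × ℕ) : Prop := x.2 < lam x.1

/-- `lam : ℕ → ℕ` is the row-length function of a partition: weakly decreasing and
eventually zero. -/
def IsPartitionFn (lam : ℕ → ℕ) : Prop := Antitone lam ∧ ∃ N, ∀ n, N ≤ n → lam n = 0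

/-- A genomic tableau of shape `lam`: a semistandard filling (positive entries, rows weakly
increasing left-to-right, columns strictly increasing top-to-bottom) together with, for each
`i`, a partition of the boxes labeled `i` into genes, encoded by the relation `sameGene`.
Boxes in a common gene share their entry; if a gene has boxes (necessarily with a common
entry) in columns `c₁ < c₃`, then every box with the same entry in an intervening column
belongs to the same gene; and no gene has two boxes in a common row.  Entries and the
relation are normalized (to `0`, resp. `False`) outside the shape so that equality of
structures agrees with equality of tableaux. -/
structure GenomicTableau (lam : ℕ → ℕ) where
  entry : ℕ × ℕ → ℕ
  sameGene : ℕ × ℕ → ℕ × ℕ → Prop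
  entry_pos : ∀ x, InShape lam x → 0 < entry x
  entry_zero : ∀ x, ¬ InShape lam x → entry x = 0
  row_weak : ∀ r c₁ c₂, c₁ ≤ c₂ → InShape lam (r, c₂) → entry (r, c₁) ≤ entry (r, c₂)
  col_strict : ∀ r₁ r₂ c, r₁ < r₂ → InShape lam (r₂, c) → entry (r₁, c) < entry (r₂, c)
  sameGene_mem : ∀ x y, sameGene x y → InShape lam x ∧ InShape lam y
  sameGene_refl : ∀ x, InShape lam x → sameGene x x
  sameGene_symm : ∀ x y, sameGene x y → sameGene y x
  sameGene_trans : ∀ x y z, sameGene x y → sameGene y z → sameGene x z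
  sameGene_entry : ∀ x y, sameGene x y → entry x = entry y
  sameGene_interval : ∀ x y z, sameGene x z → InShape lam y → entry y = entry x →
    x.2 < y.2 → y.2 < z.2 → sameGene x y
  sameGene_row : ∀ x y, sameGene x y → x.1 = y.1 → x = y

/-- `x` is the leftmost box of its gene in the genomic tableau `T`. -/
def IsGeneLeader {lam : ℕ → ℕ} (T : GenomicTableau lam) (x : ℕ × ℕ) : Prop :=
  InShape lam x ∧ ∀ y, T.sameGene x y → x.2 ≤ y.2

/-- The number of `(n+1)`-genes of `T` (counted via their leftmost boxes).  Thus `wt T` is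
the weight of `T` as a weak composition indexed from `0`: the variable `x_n` records
`(n+1)`-genes. -/
noncomputable def wt {lam : ℕ → ℕ} (T : GenomicTableau lam) (n : ℕ) : ℕ :=
  {x | IsGeneLeader T x ∧ T.entry x = n + 1}.ncard

/-- The largest entry of the genomic tableau `T`. -/
noncomputable def maxEntry {lam : ℕ → ℕ} (T : GenomicTableau lam) : ℕ :=
  sSup {n | ∃ x, InShape lam x ∧ T.entry x = n}

/-- The positive part of the weight of `T`: the list of nonzero components of `wt T`,
in order. -/
noncomputable def wtPos {lam : ℕ → ℕ} (T : GenomicTableau lam) : List ℕ :=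
  ((List.range (maxEntry T)).map (wt T)).filter (fun e => decide (0 < e))

/-- The (strong) composition `β` refines `α` if `α` is obtained from `β` by summing
consecutive blocks. -/
def Refines (β α : List ℕ) : Prop :=
  ∃ L : List (List ℕ), L.flatten = β ∧ L.map List.sum = α

/-- The positive part of a weak composition `m`: the list of its nonzero values in order of
the index. -/
noncomputable def posPart (m : ℕ →₀ ℕ) : List ℕ :=
  (m.support.sort (· ≤ ·)).map (fun i => m i)

/-- The fundamental quasisymmetric function `F_α`, a power series in variables indexed
by `ℕ`: the sum of `x^m` over all weak compositions `m` whose positive part refines `α`. -/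
noncomputable def fundamentalF (α : List ℕ) : MvPowerSeries ℕ ℤ :=
  fun m : ℕ →₀ ℕ => if Refines (posPart m) α then 1 else 0

/-- The genomic Schur function `U_lam`: the coefficient of `x^m` is the number of genomic
tableaux of shape `lam` with weight `m`. -/
noncomputable def genomicSchur (lam : ℕ → ℕ) : MvPowerSeries ℕ ℤ :=
  fun m : ℕ →₀ ℕ => (Nat.card {T : GenomicTableau lam // ∀ n, wt T n = m n} : ℤ)

/-- A genomic tableau is quasiYamanouchi if for every `i > 1` appearing in it, some
instance of `i` is weakly west of some instance of `i-1`. -/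
def IsQY {lam : ℕ → ℕ} (T : GenomicTableau lam) : Prop :=
  ∀ i, 2 ≤ i → (∃ x, InShape lam x ∧ T.entry x = i) →
    ∃ x y, InShape lam x ∧ InShape lam y ∧
      T.entry x = i ∧ T.entry y = i - 1 ∧ x.2 ≤ y.2

/-- One step of the regularization algorithm: if `i ≥ 2` appears in `T` and every box
labeled `i` is strictly east of every box labeled `i-1`, replace every label `i` by `i-1`,
keeping the gene decomposition. -/
def RegStep {lam : ℕ → ℕ} (T T' : GenomicTableau lam) : Prop :=
  ∃ i, 2 ≤ i ∧ (∃ x, InShape lam x ∧ T.entry x = i) ∧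
    (∀ x y, InShape lam x → InShape lam y → T.entry x = i → T.entry y = i - 1 → y.2 < x.2) ∧
    (∀ x, T'.entry x = if T.entry x = i then i - 1 else T.entry x) ∧
    (∀ x y, T'.sameGene x y ↔ T.sameGene x y)

/-- An increasing tableau of shape `lam`: positive entries, strictly increasing along rows
and down columns, normalized to `0` outside the shape. -/
structure IncreasingTableau (lam : ℕ → ℕ) where
  entry : ℕ × ℕ → ℕ
  entry_pos : ∀ x, InShape lam x → 0 < entry x
  entry_zero : ∀ x, ¬ InShape lam x → entry x = 0
  row_strict : ∀ r c₁ c₂, c₁ < c₂ → InShape lam (r, c₂) → entry (r, c₁) < entry (r, c₂)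
  col_strict : ∀ r₁ r₂ c, r₁ < r₂ → InShape lam (r₂, c) → entry (r₁, c) < entry (r₂, c)

/-- The largest entry of the increasing tableau `T`. -/
noncomputable def maxEntryInc {lam : ℕ → ℕ} (T : IncreasingTableau lam) : ℕ :=
  sSup {n | ∃ x, InShape lam x ∧ T.entry x = n}

/-- An increasing tableau is gapless if its set of entries is `{1, …, n}` for some `n`. -/
def Gapless {lam : ℕ → ℕ} (T : IncreasingTableau lam) : Prop :=
  ∀ i, 0 < i → i ≤ maxEntryInc T → ∃ x, InShape lam x ∧ T.entry x = i

/-- `i` is a descent of the increasing tableau `T` if some instance of `i` lies in a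
strictly higher row than some instance of `i+1`. -/
def IsDescent {lam : ℕ → ℕ} (T : IncreasingTableau lam) (i : ℕ) : Prop :=
  ∃ x y, InShape lam x ∧ InShape lam y ∧ T.entry x = i ∧ T.entry y = i + 1 ∧ x.1 < y.1

/-- The descent composition of a gapless increasing tableau with entries `{1, …, n}`:
the lengths of the segments of the word `1 2 ⋯ n` cut after each descent. -/
noncomputable def descComp {lam : ℕ → ℕ} (T : IncreasingTableau lam) : List ℕ :=
  let n := maxEntryInc T
  let ds := (((Finset.range n).filter fun i => IsDescent T i).sort (· ≤ ·)) ++ [n]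
  (ds.zip (0 :: ds)).map fun p => p.1 - p.2

/-- A standard Young tableau, viewed as an increasing tableau: gapless with all entries
distinct (so the entries are `1, …, |lam|`, each exactly once). -/
def IsStandard {lam : ℕ → ℕ} (T : IncreasingTableau lam) : Prop :=
  Gapless T ∧ ∀ x y, InShape lam x → InShape lam y → T.entry x = T.entry y → x = y

/-- The column of the leftmost box of the gene of `x` in `T`. -/
noncomputable def leadCol {lam : ℕ → ℕ} (T : GenomicTableau lam) (x : ℕ × ℕ) : ℕ :=
  sInf {c | ∃ y, T.sameGene x y ∧ y.2 = c}

/-- K-standardization `Φ`: order the genes of `T` by listing the `1`-genes left to right,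
then the `2`-genes left to right, and so on; `kStd T x` is the (1-based) position of the
gene of `x` in this order (and `0` outside the shape). -/
noncomputable def kStd {lam : ℕ → ℕ} (T : GenomicTableau lam) (x : ℕ × ℕ) : ℕ :=
  if InShape lam x then
    {y | IsGeneLeader T y ∧ (T.entry y < T.entry x ∨
        (T.entry y = T.entry x ∧ y.2 ≤ leadCol T x))}.ncard
  else 0

/-- A semistandard tableau of shape `lam`, with positive entries, normalized to `0`
outside the shape. -/
structure SemistandardTableau (lam : ℕ → ℕ) where
  entry : ℕ × ℕ → ℕ
  entry_pos : ∀ x, InShape lam x → 0 < entry x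
  entry_zero : ∀ x, ¬ InShape lam x → entry x = 0
  row_weak : ∀ r c₁ c₂, c₁ ≤ c₂ → InShape lam (r, c₂) → entry (r, c₁) ≤ entry (r, c₂)
  col_strict : ∀ r₁ r₂ c, r₁ < r₂ → InShape lam (r₂, c) → entry (r₁, c) < entry (r₂, c)

/-- The number of boxes of `T` with entry `n+1` (matching the variable convention of
`wt`: the variable `x_n` records the entry `n+1`). -/
noncomputable def contentOf {lam : ℕ → ℕ} (T : SemistandardTableau lam) (n : ℕ) : ℕ :=
  {x | InShape lam x ∧ T.entry x = n + 1}.ncard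

/-- The Schur function `s_mu` as the generating function of semistandard tableaux of
shape `mu` by content. -/
noncomputable def schurFn (mu : ℕ → ℕ) : MvPowerSeries ℕ ℤ :=
  fun m : ℕ →₀ ℕ => (Nat.card {T : SemistandardTableau mu // ∀ n, contentOf T n = m n} : ℤ)

/-- The row-length function of the flag-shaped partition `(a, b, 1^k)`. -/
def flagShape (a b k : ℕ) : ℕ → ℕ :=
  fun r => if r = 0 then a else if r = 1 then b else if r < k + 2 then 1 else 0

/-- The homogeneous component of degree `d` of a power series. -/
noncomputable def homComponent (d : ℕ) (f : MvPowerSeries ℕ ℤ) : MvPowerSeries ℕ ℤ :=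
  fun m : ℕ →₀ ℕ => if (m.sum fun _ e => e) = d then MvPowerSeries.coeff m f else 0

/-- The complete homogeneous symmetric function `h_k` (`h_0 = 1`, and `h_k = 0` for
`k < 0`): the sum of all monomials of total degree `k`. -/
noncomputable def hSeries (k : ℤ) : MvPowerSeries ℕ ℤ :=
  fun m : ℕ →₀ ℕ => if ((m.sum fun _ e => e : ℕ) : ℤ) = k then 1 else 0

/-- The Schur function of an arbitrary (strong) composition `α`, via the Jacobi–Trudi
determinant `s_α = det(h_{α_i - i + j})`. -/
noncomputable def schurComp (α : List ℕ) : MvPowerSeries ℕ ℤ :=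
  Matrix.det (Matrix.of fun i j : Fin α.length =>
    hSeries ((α.get i : ℤ) - (i : ℕ) + (j : ℕ)))

/-- `e` lies in the `i`-th block (0-indexed) `M_{i+1}(α) = {α_1 + ⋯ + α_i + 1, …,
α_1 + ⋯ + α_{i+1}}` of the composition `α`. -/
def InBlock (α : List ℕ) (i : ℕ) (e : ℕ) : Prop :=
  (α.take i).sum < e ∧ e ≤ (α.take (i + 1)).sum

/-- The positive part of a weak composition of length `n`. -/
noncomputable def posPartFin {n : ℕ} (m : Fin n →₀ ℕ) : List ℕ :=
  (List.ofFn fun k : Fin n => m k).filter (fun e => decide (0 < e))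

/-- The fundamental quasisymmetric polynomial `F_α(x_1, …, x_n)` in `n` variables. -/
noncomputable def fundamentalFFin (n : ℕ) (α : List ℕ) : MvPowerSeries (Fin n) ℤ :=
  fun m : Fin n →₀ ℕ => if Refines (posPartFin m) α then 1 else 0

/-- The genomic Schur polynomial `U_lam(x_1, …, x_n)`: the generating function of genomic
tableaux with all entries at most `n`, by weight. -/
noncomputable def genomicSchurPoly (lam : ℕ → ℕ) (n : ℕ) : MvPowerSeries (Fin n) ℤ :=
  fun m : Fin n →₀ ℕ =>
    (Nat.card {T : GenomicTableau lam //
      (∀ x, InShape lam x → T.entry x ≤ n) ∧ ∀ k : Fin n, wt T (k : ℕ) = m k} : ℤ)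

/-- The generating function of the fiber of the regularization map over `U`: the
coefficient of `x^m` counts genomic tableaux `V` with `reg V = U` and weight `m`. -/
noncomputable def regFiberSeries {lam : ℕ → ℕ}
    (reg : GenomicTableau lam → GenomicTableau lam) (U : GenomicTableau lam) :
    MvPowerSeries ℕ ℤ :=
  fun m : ℕ →₀ ℕ =>
    (Nat.card {V : GenomicTableau lam // reg V = U ∧ ∀ n, wt V n = m n} : ℤ)


variable {lam : ℕ → ℕ}

lemma shape_finite (hlam : IsPartitionFn lam) : {x : ℕ × ℕ | InShape lam x}.Finite := by
  obtain ⟨hanti, N, hN⟩ := hlam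
  apply Set.Finite.subset ((Set.finite_Iio N).prod (Set.finite_Iio (lam 0)))
  rintro ⟨r, c⟩ hx
  have hx' : c < lam r := hx
  constructor
  · by_contra h
    simp only [Set.mem_Iio, not_lt] at h
    have := hN r h; omega
  · exact lt_of_lt_of_le hx' (hanti (Nat.zero_le r))

lemma gt_ext {T₁ T₂ : GenomicTableau lam} (h1 : ∀ x, T₁.entry x = T₂.entry x)
    (h2 : ∀ x y, T₁.sameGene x y ↔ T₂.sameGene x y) : T₁ = T₂ := by
  have e1 : T₁.entry = T₂.entry := funext h1
  have e2 : T₁.sameGene = T₂.sameGene := funext fun x => funext fun y => propext (h2 x y)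
  cases T₁; cases T₂
  simp only at e1 e2
  subst e1; subst e2; rfl

section Basic
variable {lam : ℕ → ℕ} (T : GenomicTableau lam)

lemma same_col_entry_eq {x y : ℕ × ℕ} (hx : InShape lam x) (hy : InShape lam y)
    (hc : x.2 = y.2) (he : T.entry x = T.entry y) : x = y := by
  obtain ⟨a, c⟩ := x
  obtain ⟨b, c'⟩ := y
  simp only at hc
  subst hc
  rcases lt_trichotomy a b with h1 | h1 | h1
  · have := T.col_strict a b c h1 hy; omega
  · exact Prod.ext h1 rfl
  · have := T.col_strict b a c h1 hx; omega

lemma gene_col_inj {x y : ℕ × ℕ} (h : T.sameGene x y) (hc : x.2 = y.2) : x = y := by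
  obtain ⟨hx, hy⟩ := T.sameGene_mem x y h
  exact same_col_entry_eq T hx hy hc (T.sameGene_entry x y h)

lemma exists_leader {x : ℕ × ℕ} (hx : InShape lam x) :
    ∃ w, T.sameGene x w ∧ IsGeneLeader T w ∧ w.2 = leadCol T x := by
  have hne : {c | ∃ y, T.sameGene x y ∧ y.2 = c}.Nonempty :=
    ⟨x.2, x, T.sameGene_refl x hx, rfl⟩
  obtain ⟨w, hw, hwc⟩ := Nat.sInf_mem hne
  refine ⟨w, hw, ⟨(T.sameGene_mem x w hw).2, fun z hz => ?_⟩, hwc⟩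
  rw [hwc]
  exact Nat.sInf_le ⟨z, T.sameGene_trans x w z hw hz, rfl⟩

lemma leadCol_le_self {x : ℕ × ℕ} (hx : InShape lam x) : leadCol T x ≤ x.2 :=
  Nat.sInf_le ⟨x, T.sameGene_refl x hx, rfl⟩

lemma leadCol_eq_of_sameGene {x y : ℕ × ℕ} (h : T.sameGene x y) :
    leadCol T x = leadCol T y := by
  unfold leadCol
  congr 1
  ext c
  constructor
  · rintro ⟨z, hz, rfl⟩
    exact ⟨z, T.sameGene_trans y x z (T.sameGene_symm x y h) hz, rfl⟩
  · rintro ⟨z, hz, rfl⟩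
    exact ⟨z, T.sameGene_trans x y z h hz, rfl⟩

lemma leader_leadCol {w : ℕ × ℕ} (hw : IsGeneLeader T w) : leadCol T w = w.2 := by
  apply le_antisymm (leadCol_le_self T hw.1)
  obtain ⟨z, hz, hzl, hzc⟩ := exists_leader T hw.1
  rw [← hzc]
  exact hw.2 z hz

lemma leader_unique {w w' : ℕ × ℕ} (hw : IsGeneLeader T w) (hw' : IsGeneLeader T w')
    (h : T.sameGene w w') : w = w' :=
  gene_col_inj T h (le_antisymm (hw.2 w' h) (hw'.2 w (T.sameGene_symm w w' h)))

end Basic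
section Count
variable {lam : ℕ → ℕ} (T : GenomicTableau lam)

noncomputable def countLe (i : ℕ) : ℕ := {w | IsGeneLeader T w ∧ T.entry w ≤ i}.ncard

noncomputable def nGenes : ℕ := {w | IsGeneLeader T w}.ncard

variable {T}

lemma leaders_finite (hf : {x : ℕ × ℕ | InShape lam x}.Finite) : {w | IsGeneLeader T w}.Finite :=
  hf.subset (fun w hw => hw.1)

lemma countLe_zero : countLe T 0 = 0 := by
  unfold countLe
  convert Set.ncard_empty (ℕ × ℕ)
  ext w
  simp only [Set.mem_setOf_eq, Set.mem_empty_iff_false, iff_false, not_and]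
  intro h1 h2
  have := T.entry_pos w h1.1
  omega

lemma countLe_succ (hf : {x : ℕ × ℕ | InShape lam x}.Finite) (i : ℕ) :
    countLe T (i + 1) = countLe T i + wt T i := by
  have hA : {w | IsGeneLeader T w ∧ T.entry w ≤ i}.Finite :=
    (leaders_finite hf).subset (fun w hw => hw.1)
  have hB : {x | IsGeneLeader T x ∧ T.entry x = i + 1}.Finite :=
    (leaders_finite hf).subset (fun w hw => hw.1)
  have hd : Disjoint {w | IsGeneLeader T w ∧ T.entry w ≤ i} {x | IsGeneLeader T x ∧ T.entry x = i + 1} := by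
    rw [Set.disjoint_left]
    rintro w ⟨h1, h2⟩ ⟨h3, h4⟩
    omega
  have hs : {w | IsGeneLeader T w ∧ T.entry w ≤ i + 1} =
      {w | IsGeneLeader T w ∧ T.entry w ≤ i} ∪ {x | IsGeneLeader T x ∧ T.entry x = i + 1} := by
    ext w
    simp only [Set.mem_setOf_eq, Set.mem_union]
    constructor
    · rintro ⟨h1, h2⟩
      rcases Nat.lt_or_ge (T.entry w) (i + 1) with h | h
      · exact Or.inl ⟨h1, by omega⟩
      · exact Or.inr ⟨h1, by omega⟩
    · rintro (⟨h1, h2⟩ | ⟨h1, h2⟩)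
      · exact ⟨h1, by omega⟩
      · exact ⟨h1, by omega⟩
  unfold countLe wt
  rw [hs, Set.ncard_union_eq hd hA hB]

lemma sum_range_wt (hf : {x : ℕ × ℕ | InShape lam x}.Finite) (i : ℕ) : ((List.range i).map (wt T)).sum = countLe T i := by
  induction i with
  | zero => simp [countLe_zero]
  | succ n ih => rw [List.range_succ, List.map_append, List.sum_append, countLe_succ hf]; simp [ih]

lemma entryImage_finite (hf : {x : ℕ × ℕ | InShape lam x}.Finite) : {n | ∃ x, InShape lam x ∧ T.entry x = n}.Finite := by
  have h : {n | ∃ x, InShape lam x ∧ T.entry x = n} = T.entry '' {x | InShape lam x} := by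
    ext n
    simp only [Set.mem_setOf_eq, Set.mem_image]
  rw [h]; exact hf.image _

lemma entry_le_maxEntry (hf : {x : ℕ × ℕ | InShape lam x}.Finite) {x : ℕ × ℕ} (hx : InShape lam x) : T.entry x ≤ maxEntry T :=
  le_csSup (entryImage_finite hf).bddAbove ⟨x, hx, rfl⟩

lemma used_of_QY (hf : {x : ℕ × ℕ | InShape lam x}.Finite) (hT : IsQY T) :
    ∀ i, 1 ≤ i → i ≤ maxEntry T → ∃ x, InShape lam x ∧ T.entry x = i := by
  have hmax : ∀ i, 1 ≤ i → i ≤ maxEntry T → ∃ x, InShape lam x ∧ T.entry x = maxEntry T := by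
    intro i h1 h2
    have hne : {n | ∃ x, InShape lam x ∧ T.entry x = n}.Nonempty := by
      by_contra h
      rw [Set.not_nonempty_iff_eq_empty] at h
      have : maxEntry T = 0 := by unfold maxEntry; rw [h]; exact csSup_empty
      omega
    exact Nat.sSup_mem hne (entryImage_finite hf).bddAbove
  intro i h1 h2
  obtain ⟨d, hd⟩ : ∃ d, i + d = maxEntry T := ⟨maxEntry T - i, by omega⟩
  induction d generalizing i with
  | zero =>
    have : i = maxEntry T := by omega
    subst this
    simpa using hmax _ h1 (by omega)
  | succ d ih =>
    obtain ⟨x, hx, he⟩ := ih (i + 1) (by omega) (by omega) (by omega)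
    obtain ⟨a, b, _, hb, _, hbe, _⟩ := hT (i + 1) (by omega) ⟨x, hx, he⟩
    exact ⟨b, hb, by simpa using hbe⟩

lemma wt_pos_of_QY (hf : {x : ℕ × ℕ | InShape lam x}.Finite) (hT : IsQY T) {i : ℕ} (hi : i < maxEntry T) : 0 < wt T i := by
  obtain ⟨x, hx, he⟩ := used_of_QY hf hT (i + 1) (by omega) (by omega)
  obtain ⟨w, hw, hwl, _⟩ := exists_leader T hx
  have : w ∈ {x | IsGeneLeader T x ∧ T.entry x = i + 1} :=
    ⟨hwl, by rw [← T.sameGene_entry x w hw, he]⟩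
  rw [wt, Set.ncard_pos ((leaders_finite hf).subset (fun z hz => hz.1))]
  exact ⟨w, this⟩

lemma countLe_maxEntry (hf : {x : ℕ × ℕ | InShape lam x}.Finite) : countLe T (maxEntry T) = nGenes T := by
  unfold countLe nGenes
  congr 1
  ext w
  simp only [Set.mem_setOf_eq, and_iff_left_iff_imp]
  exact fun hw => entry_le_maxEntry hf hw.1

end Count
section KStd
variable {lam : ℕ → ℕ} {T : GenomicTableau lam}

def kSet (T : GenomicTableau lam) (x : ℕ × ℕ) : Set (ℕ × ℕ) :=
  {y | IsGeneLeader T y ∧ (T.entry y < T.entry x ∨ (T.entry y = T.entry x ∧ y.2 ≤ leadCol T x))}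

lemma kStd_eq_ncard {x : ℕ × ℕ} (hx : InShape lam x) : kStd T x = (kSet T x).ncard := if_pos hx

lemma kSet_finite (hf : {x : ℕ × ℕ | InShape lam x}.Finite) (x : ℕ × ℕ) :
    (kSet T x).Finite := (leaders_finite hf).subset fun y hy => hy.1

lemma own_leader_mem_kSet {x w : ℕ × ℕ} (hg : T.sameGene x w) (hw : IsGeneLeader T w)
    (hwc : w.2 = leadCol T x) : w ∈ kSet T x :=
  ⟨hw, Or.inr ⟨(T.sameGene_entry x w hg).symm, le_of_eq hwc⟩⟩

lemma kStd_pos (hf : {x : ℕ × ℕ | InShape lam x}.Finite) {x : ℕ × ℕ} (hx : InShape lam x) :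
    1 ≤ kStd T x := by
  obtain ⟨w, hg, hw, hwc⟩ := exists_leader T hx
  rw [kStd_eq_ncard hx]
  rw [Nat.succ_le_iff, Set.ncard_pos (kSet_finite hf x)]
  exact ⟨w, own_leader_mem_kSet hg hw hwc⟩

lemma kStd_le_countLe (hf : {x : ℕ × ℕ | InShape lam x}.Finite) {x : ℕ × ℕ}
    (hx : InShape lam x) : kStd T x ≤ countLe T (T.entry x) := by
  rw [kStd_eq_ncard hx]
  apply Set.ncard_le_ncard _ ((leaders_finite hf).subset fun y hy => hy.1)
  rintro y ⟨hy, h | h⟩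
  · exact ⟨hy, by omega⟩
  · exact ⟨hy, le_of_eq h.1⟩

lemma countLe_pred_lt_kStd (hf : {x : ℕ × ℕ | InShape lam x}.Finite) {x : ℕ × ℕ}
    (hx : InShape lam x) : countLe T (T.entry x - 1) < kStd T x := by
  obtain ⟨w, hg, hw, hwc⟩ := exists_leader T hx
  have he := T.entry_pos x hx
  rw [kStd_eq_ncard hx]
  apply Set.ncard_lt_ncard _ (kSet_finite hf x)
  constructor
  · rintro y ⟨hy, h⟩
    exact ⟨hy, Or.inl (by omega)⟩
  · intro hsub
    have := hsub (own_leader_mem_kSet hg hw hwc)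
    have h2 : T.entry w = T.entry x := (T.sameGene_entry x w hg).symm
    obtain ⟨-, h3⟩ := this
    omega

lemma kStd_lt_of_entry_lt (hf : {x : ℕ × ℕ | InShape lam x}.Finite) {x y : ℕ × ℕ}
    (hx : InShape lam x) (hy : InShape lam y) (h : T.entry x < T.entry y) :
    kStd T x < kStd T y := by
  obtain ⟨w, hg, hw, hwc⟩ := exists_leader T hy
  rw [kStd_eq_ncard hx, kStd_eq_ncard hy]
  apply Set.ncard_lt_ncard _ (kSet_finite hf y)
  constructor
  · rintro z ⟨hz, hc | hc⟩
    · exact ⟨hz, Or.inl (by omega)⟩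
    · exact ⟨hz, Or.inl (by omega)⟩
  · intro hsub
    obtain ⟨-, hc | hc⟩ := hsub (own_leader_mem_kSet hg hw hwc)
    · have := (T.sameGene_entry y w hg); omega
    · have := (T.sameGene_entry y w hg); omega

lemma kStd_le_of_leadCol_le {x y : ℕ × ℕ} (hx : InShape lam x) (hy : InShape lam y)
    (he : T.entry x = T.entry y) (hl : leadCol T x ≤ leadCol T y) (hf : {x : ℕ × ℕ | InShape lam x}.Finite) :
    kStd T x ≤ kStd T y := by
  rw [kStd_eq_ncard hx, kStd_eq_ncard hy]
  apply Set.ncard_le_ncard _ (kSet_finite hf y)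
  rintro z ⟨hz, hc | hc⟩
  · exact ⟨hz, Or.inl (by omega)⟩
  · exact ⟨hz, Or.inr ⟨by omega, le_trans hc.2 hl⟩⟩

lemma kStd_lt_of_leadCol_lt {x y : ℕ × ℕ} (hx : InShape lam x) (hy : InShape lam y)
    (he : T.entry x = T.entry y) (hl : leadCol T x < leadCol T y)
    (hf : {x : ℕ × ℕ | InShape lam x}.Finite) : kStd T x < kStd T y := by
  obtain ⟨w, hg, hw, hwc⟩ := exists_leader T hy
  rw [kStd_eq_ncard hx, kStd_eq_ncard hy]
  apply Set.ncard_lt_ncard _ (kSet_finite hf y)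
  constructor
  · rintro z ⟨hz, hc | hc⟩
    · exact ⟨hz, Or.inl (by omega)⟩
    · exact ⟨hz, Or.inr ⟨by omega, le_trans hc.2 (le_of_lt hl)⟩⟩
  · intro hsub
    obtain ⟨-, hc | hc⟩ := hsub (own_leader_mem_kSet hg hw hwc)
    · have := (T.sameGene_entry y w hg); omega
    · have := (T.sameGene_entry y w hg); omega

lemma kStd_eq_of_sameGene {x y : ℕ × ℕ} (h : T.sameGene x y) : kStd T x = kStd T y := by
  obtain ⟨hx, hy⟩ := T.sameGene_mem x y h
  rw [kStd_eq_ncard hx, kStd_eq_ncard hy]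
  congr 1
  unfold kSet
  rw [T.sameGene_entry x y h, leadCol_eq_of_sameGene T h]

lemma col_lt_of_leadCol_lt (hf : {x : ℕ × ℕ | InShape lam x}.Finite) {x y : ℕ × ℕ}
    (hx : InShape lam x) (hy : InShape lam y) (he : T.entry x = T.entry y)
    (hg : ¬ T.sameGene x y) (hl : leadCol T x < leadCol T y) : x.2 < y.2 := by
  by_contra hcon
  push_neg at hcon
  obtain ⟨wx, hgx, hwx, hwxc⟩ := exists_leader T hx
  obtain ⟨wy, hgy, hwy, hwyc⟩ := exists_leader T hy
  have h1 : wy.2 ≤ y.2 := hwyc ▸ leadCol_le_self T hy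
  have hewy : T.entry wy = T.entry x := by rw [← T.sameGene_entry y wy hgy, he]
  have h2 : wy.2 ≠ x.2 := by
    intro hc
    have : wy = x := same_col_entry_eq T hwy.1 hx hc hewy
    exact hg (T.sameGene_symm y x (this ▸ hgy))
  have h3 : wx.2 < wy.2 := by rw [hwxc, hwyc]; exact hl
  have h4 : wy.2 < x.2 := by omega
  have h5 : T.sameGene wx x := T.sameGene_symm x wx hgx
  have h6 : T.entry wy = T.entry wx := by rw [hewy, T.sameGene_entry wx x h5]
  have h7 := T.sameGene_interval wx wy x h5 hwy.1 h6 h3 h4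
  exact hg (T.sameGene_trans x wy y (T.sameGene_trans x wx wy hgx h7) (T.sameGene_symm y wy hgy))

lemma kStd_injOn_leaders (hf : {x : ℕ × ℕ | InShape lam x}.Finite) :
    Set.InjOn (kStd T) {w | IsGeneLeader T w} := by
  intro w hw w' hw' heq
  by_contra hne
  rcases lt_trichotomy (T.entry w) (T.entry w') with h | h | h
  · have := kStd_lt_of_entry_lt hf hw.1 hw'.1 h; omega
  · rcases lt_trichotomy w.2 w'.2 with hc | hc | hc
    · have : leadCol T w < leadCol T w' := by
        rw [leader_leadCol T hw, leader_leadCol T hw']; exact hc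
      have := kStd_lt_of_leadCol_lt hw.1 hw'.1 h this hf; omega
    · exact hne (same_col_entry_eq T hw.1 hw'.1 hc h)
    · have : leadCol T w' < leadCol T w := by
        rw [leader_leadCol T hw, leader_leadCol T hw']; exact hc
      have := kStd_lt_of_leadCol_lt hw'.1 hw.1 h.symm this hf; omega
  · have := kStd_lt_of_entry_lt hf hw'.1 hw.1 h; omega

lemma kStd_le_nGenes (hf : {x : ℕ × ℕ | InShape lam x}.Finite) {x : ℕ × ℕ}
    (hx : InShape lam x) : kStd T x ≤ nGenes T := by
  rw [kStd_eq_ncard hx]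
  exact Set.ncard_le_ncard (fun y hy => hy.1) (leaders_finite hf)

lemma kStd_image_leaders (hf : {x : ℕ × ℕ | InShape lam x}.Finite) :
    kStd T '' {w | IsGeneLeader T w} = Set.Icc 1 (nGenes T) := by
  apply Set.eq_of_subset_of_ncard_le
  · rintro r ⟨w, hw, rfl⟩
    exact ⟨kStd_pos hf hw.1, kStd_le_nGenes hf hw.1⟩
  · rw [Set.ncard_image_of_injOn (kStd_injOn_leaders hf)]
    have : (Set.Icc 1 (nGenes T)).ncard = nGenes T := by
      rw [← Finset.coe_Icc, Set.ncard_coe_finset, Nat.card_Icc]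
      omega
    rw [this]; exact le_of_eq rfl
  · exact Set.finite_Icc _ _

end KStd

lemma card_kStd_Ioc {lam : ℕ → ℕ} {T : GenomicTableau lam}
    (hf : {x : ℕ × ℕ | InShape lam x}.Finite) (a b : ℕ) (hb : b ≤ nGenes T) :
    {w | IsGeneLeader T w ∧ a < kStd T w ∧ kStd T w ≤ b}.ncard = b - a := by
  have hinj : Set.InjOn (kStd T) {w | IsGeneLeader T w ∧ a < kStd T w ∧ kStd T w ≤ b} :=
    (kStd_injOn_leaders hf).mono (fun w hw => hw.1)
  have himg : kStd T '' {w | IsGeneLeader T w ∧ a < kStd T w ∧ kStd T w ≤ b} = Set.Ioc a b := by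
    ext r
    constructor
    · rintro ⟨w, ⟨hw, h1, h2⟩, rfl⟩
      exact ⟨h1, h2⟩
    · rintro ⟨h1, h2⟩
      have hr : r ∈ Set.Icc 1 (nGenes T) := ⟨by omega, le_trans h2 hb⟩
      rw [← kStd_image_leaders hf] at hr
      obtain ⟨w, hw, rfl⟩ := hr
      exact ⟨w, ⟨hw, h1, h2⟩, rfl⟩
  have := Set.ncard_image_of_injOn hinj
  rw [himg] at this
  rw [← this, ← Finset.coe_Ioc, Set.ncard_coe_finset, Nat.card_Ioc]
section Merge
variable {lam : ℕ → ℕ}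

def mergeCond (T : GenomicTableau lam) (i : ℕ) : Prop :=
  2 ≤ i ∧ (∃ x, InShape lam x ∧ T.entry x = i) ∧
    (∀ x y, InShape lam x → InShape lam y → T.entry x = i → T.entry y = i - 1 → y.2 < x.2)

def merged (T : GenomicTableau lam) (i : ℕ) (h : mergeCond T i) : GenomicTableau lam where
  entry := fun x => if T.entry x = i then i - 1 else T.entry x
  sameGene := T.sameGene
  entry_pos := by
    intro x hx
    have := T.entry_pos x hx
    have := h.1
    split <;> omega
  entry_zero := by
    intro x hx
    have := T.entry_zero x hx
    have := h.1
    split <;> omega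
  row_weak := by
    intro r c₁ c₂ hc hsh
    have := T.row_weak r c₁ c₂ hc hsh
    split <;> split <;> omega
  col_strict := by
    intro r₁ r₂ c h12 hsh
    have horig := T.col_strict r₁ r₂ c h12 hsh
    have h2 := h.1
    by_cases h1 : T.entry (r₁, c) = i - 1
    · by_cases hb : T.entry (r₂, c) = i
      · -- collapse case: contradiction via east condition
        have hsh1 : InShape lam (r₁, c) := by
          by_contra hcon
          have := T.entry_zero _ hcon
          omega
        have := h.2.2 (r₂, c) (r₁, c) hsh hsh1 hb h1
        simp at this
      · split <;> omega
    · split <;> split <;> omega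
  sameGene_mem := T.sameGene_mem
  sameGene_refl := T.sameGene_refl
  sameGene_symm := T.sameGene_symm
  sameGene_trans := T.sameGene_trans
  sameGene_entry := by
    intro x y hxy
    have := T.sameGene_entry x y hxy
    rw [this]
  sameGene_interval := by
    intro x y z hxz hy hey hxy hyz
    have h2 := h.1
    obtain ⟨hx, hz⟩ := T.sameGene_mem x z hxz
    have hez := T.sameGene_entry x z hxz
    by_cases h1 : T.entry y = T.entry x
    · exact T.sameGene_interval x y z hxz hy h1 hxy hyz
    · exfalso
      by_cases hxi : T.entry x = i
      · -- then merged entry x = i-1; entry y ≠ entry x so T.entry y = i - 1 with y ≠ i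
        rw [if_pos hxi] at hey
        have hyi : T.entry y ≠ i := fun hc => h1 (by omega)
        rw [if_neg hyi] at hey
        have := h.2.2 x y hx hy hxi hey
        omega
      · rw [if_neg hxi] at hey
        by_cases hyi : T.entry y = i
        · rw [if_pos hyi] at hey
          -- T.entry x = i - 1, T.entry y = i, y west of z with entry z = entry x = i-1
          have := h.2.2 y z hy hz hyi (by omega)
          omega
        · rw [if_neg hyi] at hey
          exact h1 hey
  sameGene_row := T.sameGene_row

@[simp] lemma merged_entry {T : GenomicTableau lam} {i : ℕ} (h : mergeCond T i) (x : ℕ × ℕ) :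
    (merged T i h).entry x = if T.entry x = i then i - 1 else T.entry x := rfl

@[simp] lemma merged_sameGene {T : GenomicTableau lam} {i : ℕ} (h : mergeCond T i) :
    (merged T i h).sameGene = T.sameGene := rfl

lemma regStep_merged {T : GenomicTableau lam} {i : ℕ} (h : mergeCond T i) :
    RegStep T (merged T i h) :=
  ⟨i, h.1, h.2.1, h.2.2, fun _ => rfl, fun _ _ => Iff.rfl⟩

lemma regStep_eq_merged {T T' : GenomicTableau lam} (h : RegStep T T') :
    ∃ i, ∃ hc : mergeCond T i, T' = merged T i hc := by
  obtain ⟨i, h2, hex, heast, hent, hgene⟩ := h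
  exact ⟨i, ⟨h2, hex, heast⟩, gt_ext (fun x => by rw [hent x]; rfl) (fun x y => (hgene x y).trans Iff.rfl)⟩

end Merge
section Newman
variable {lam : ℕ → ℕ}

noncomputable def mu (hf : {x : ℕ × ℕ | InShape lam x}.Finite) (T : GenomicTableau lam) : ℕ :=
  ∑ x ∈ hf.toFinset, T.entry x

lemma mu_lt_of_regStep (hf : {x : ℕ × ℕ | InShape lam x}.Finite) {T T' : GenomicTableau lam}
    (h : RegStep T T') : mu hf T' < mu hf T := by
  obtain ⟨i, hc, rfl⟩ := regStep_eq_merged h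
  obtain ⟨x₀, hx₀, he₀⟩ := hc.2.1
  have h2 := hc.1
  apply Finset.sum_lt_sum
  · intro x _
    simp only [merged_entry]
    split <;> omega
  · refine ⟨x₀, hf.mem_toFinset.mpr hx₀, ?_⟩
    simp only [merged_entry, if_pos he₀]
    omega

lemma consec_confluence {T : GenomicTableau lam} {i : ℕ}
    (hi : mergeCond T i) (hj : mergeCond T (i + 1)) :
    ∃ C, Relation.ReflTransGen RegStep (merged T i hi) C ∧
      Relation.ReflTransGen RegStep (merged T (i + 1) hj) C := by
  have h2i := hi.1
  obtain ⟨xi, hxi, hexi⟩ := hi.2.1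
  obtain ⟨xj, hxj, hexj⟩ := hj.2.1
  have hA1 : mergeCond (merged T i hi) (i + 1) := by
    refine ⟨by omega, ⟨xj, hxj, by simp only [merged_entry]; split <;> omega⟩, ?_⟩
    intro x y hx hy hex hey
    simp only [merged_entry] at hex hey
    split at hex <;> split at hey <;> omega
  have hA2 : mergeCond (merged (merged T i hi) (i + 1) hA1) i := by
    refine ⟨by omega, ⟨xj, hxj, by simp only [merged_entry]; split_ifs <;> omega⟩, ?_⟩
    intro x y hx hy hex hey
    simp only [merged_entry] at hex hey
    have hTx : T.entry x = i + 1 := by split_ifs at hex <;> omega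
    have hTy : T.entry y = i - 1 ∨ T.entry y = i := by split_ifs at hey <;> omega
    rcases hTy with hTy | hTy
    · have h1 : y.2 < xi.2 := hi.2.2 xi y hxi hy hexi hTy
      have h2 : xi.2 < x.2 := hj.2.2 x xi hx hxi hTx (by omega)
      omega
    · exact hj.2.2 x y hx hy hTx (by omega)
  have hB1 : mergeCond (merged T (i + 1) hj) i := by
    refine ⟨h2i, ⟨xi, hxi, by simp only [merged_entry]; split <;> omega⟩, ?_⟩
    intro x y hx hy hex hey
    simp only [merged_entry] at hex hey
    have hTy : T.entry y = i - 1 := by split_ifs at hey <;> omega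
    have hTx : T.entry x = i + 1 ∨ T.entry x = i := by split_ifs at hex <;> omega
    rcases hTx with hTx | hTx
    · have h1 : y.2 < xi.2 := hi.2.2 xi y hxi hy hexi hTy
      have h2 : xi.2 < x.2 := hj.2.2 x xi hx hxi hTx (by omega)
      omega
    · exact hi.2.2 x y hx hy hTx hTy
  have heq : merged (merged (merged T i hi) (i + 1) hA1) i hA2 = merged (merged T (i + 1) hj) i hB1 := by
    apply gt_ext
    · intro x
      simp only [merged_entry]
      split_ifs <;> omega
    · intro x y
      simp only [merged_sameGene]
  refine ⟨merged (merged T (i + 1) hj) i hB1, ?_, Relation.ReflTransGen.single (regStep_merged hB1)⟩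
  rw [← heq]
  exact (Relation.ReflTransGen.single (regStep_merged hA1)).tail (regStep_merged hA2)

lemma local_confluence {T A B : GenomicTableau lam} (hA : RegStep T A) (hB : RegStep T B) :
    ∃ C, Relation.ReflTransGen RegStep A C ∧ Relation.ReflTransGen RegStep B C := by
  obtain ⟨i, hi, rfl⟩ := regStep_eq_merged hA
  obtain ⟨j, hj, rfl⟩ := regStep_eq_merged hB
  rcases eq_or_ne i j with rfl | hne
  · have : merged T i hi = merged T i hj := gt_ext (fun x => rfl) (fun x y => Iff.rfl)
    exact ⟨merged T i hi, Relation.ReflTransGen.refl, by rw [← this]⟩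
  rcases eq_or_ne j (i + 1) with rfl | hne2
  · exact consec_confluence hi hj
  rcases eq_or_ne i (j + 1) with rfl | hne3
  · obtain ⟨C, h1, h2⟩ := consec_confluence hj hi
    exact ⟨C, h2, h1⟩
  -- |i - j| ≥ 2 : commute
  have h2i := hi.1
  have h2j := hj.1
  have hgap : i + 2 ≤ j ∨ j + 2 ≤ i := by omega
  obtain ⟨xi, hxi, hexi⟩ := hi.2.1
  obtain ⟨xj, hxj, hexj⟩ := hj.2.1
  have hcomm : mergeCond (merged T i hi) j := by
    refine ⟨h2j, ⟨xj, hxj, by simp only [merged_entry]; split <;> omega⟩, ?_⟩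
    intro x y hx hy hex hey
    simp only [merged_entry] at hex hey
    have hTx : T.entry x = j := by split_ifs at hex <;> omega
    have hTy : T.entry y = j - 1 := by split_ifs at hey <;> omega
    exact hj.2.2 x y hx hy hTx hTy
  have hcomm' : mergeCond (merged T j hj) i := by
    refine ⟨h2i, ⟨xi, hxi, by simp only [merged_entry]; split <;> omega⟩, ?_⟩
    intro x y hx hy hex hey
    simp only [merged_entry] at hex hey
    have hTx : T.entry x = i := by split_ifs at hex <;> omega
    have hTy : T.entry y = i - 1 := by split_ifs at hey <;> omega
    exact hi.2.2 x y hx hy hTx hTy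
  have heq : merged (merged T i hi) j hcomm = merged (merged T j hj) i hcomm' := by
    apply gt_ext
    · intro x
      simp only [merged_entry]
      split_ifs <;> omega
    · intro x y
      simp only [merged_sameGene]
  refine ⟨merged (merged T i hi) j hcomm, Relation.ReflTransGen.single (regStep_merged hcomm), ?_⟩
  rw [heq]
  exact Relation.ReflTransGen.single (regStep_merged hcomm')

lemma confluence (hf : {x : ℕ × ℕ | InShape lam x}.Finite) :
    ∀ n (T A B : GenomicTableau lam), mu hf T ≤ n →
      Relation.ReflTransGen RegStep T A → Relation.ReflTransGen RegStep T B →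
      ∃ C, Relation.ReflTransGen RegStep A C ∧ Relation.ReflTransGen RegStep B C := by
  intro n
  induction n with
  | zero =>
    intro T A B hmu hA hB
    rcases hA.cases_head with rfl | ⟨T₁, s₁, hA₁⟩
    · exact ⟨B, hB, Relation.ReflTransGen.refl⟩
    · have := mu_lt_of_regStep hf s₁; omega
  | succ n ih =>
    intro T A B hmu hA hB
    rcases hA.cases_head with rfl | ⟨T₁, s₁, hA₁⟩
    · exact ⟨B, hB, Relation.ReflTransGen.refl⟩
    rcases hB.cases_head with rfl | ⟨T₂, s₂, hB₁⟩
    · exact ⟨A, Relation.ReflTransGen.refl, hA⟩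
    obtain ⟨D, hD₁, hD₂⟩ := local_confluence s₁ s₂
    have h₁ : mu hf T₁ ≤ n := by have := mu_lt_of_regStep hf s₁; omega
    have h₂ : mu hf T₂ ≤ n := by have := mu_lt_of_regStep hf s₂; omega
    obtain ⟨E, hAE, hDE⟩ := ih T₁ A D h₁ hA₁ hD₁
    obtain ⟨F, hBF, hEF⟩ := ih T₂ B E h₂ hB₁ (hD₂.trans hDE)
    exact ⟨F, hAE.trans hEF, hBF⟩

def NormalT (T : GenomicTableau lam) : Prop := ∀ T', ¬ RegStep T T'

lemma normal_of_QY {T : GenomicTableau lam} (hT : IsQY T) : NormalT T := by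
  rintro T' ⟨i, h2, ⟨x, hx, he⟩, heast, -, -⟩
  obtain ⟨a, b, ha, hb, hea, heb, hab⟩ := hT i h2 ⟨x, hx, he⟩
  have := heast a b ha hb hea heb
  omega

lemma normal_rtg_eq {T A : GenomicTableau lam} (h : Relation.ReflTransGen RegStep T A)
    (hT : NormalT T) : A = T := by
  rcases h.cases_head with rfl | ⟨c, s, _⟩
  · rfl
  · exact absurd s (hT c)

lemma normal_unique (hf : {x : ℕ × ℕ | InShape lam x}.Finite) {T A B : GenomicTableau lam}
    (hA : Relation.ReflTransGen RegStep T A) (hB : Relation.ReflTransGen RegStep T B)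
    (nA : NormalT A) (nB : NormalT B) : A = B := by
  obtain ⟨C, h1, h2⟩ := confluence hf (mu hf T) T A B le_rfl hA hB
  rw [← normal_rtg_eq h1 nA, ← normal_rtg_eq h2 nB]

end Newman
section Invariants
variable {lam : ℕ → ℕ}

def ChainInv (V T : GenomicTableau lam) : Prop :=
  (∀ x y, V.sameGene x y ↔ T.sameGene x y) ∧
  (∀ x y, InShape lam x → InShape lam y → V.entry x ≤ V.entry y → T.entry x ≤ T.entry y) ∧
  (∀ x y, InShape lam x → InShape lam y → T.entry x = T.entry y → V.entry x < V.entry y →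
    x.2 < y.2)

lemma chainInv_refl (V : GenomicTableau lam) : ChainInv V V :=
  ⟨fun _ _ => Iff.rfl, fun _ _ _ _ h => h, fun x y _ _ he hlt => absurd he (by omega)⟩

lemma chainInv_step {V T T' : GenomicTableau lam} (h : ChainInv V T) (s : RegStep T T') :
    ChainInv V T' := by
  obtain ⟨i, hc, rfl⟩ := regStep_eq_merged s
  have h2 := hc.1
  refine ⟨fun x y => (h.1 x y).trans Iff.rfl, ?_, ?_⟩
  · intro x y hx hy hV
    have := h.2.1 x y hx hy hV
    simp only [merged_entry]
    split_ifs <;> omega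
  · intro x y hx hy hT hV
    simp only [merged_entry] at hT
    have hle := h.2.1 x y hx hy (le_of_lt hV)
    rcases eq_or_lt_of_le hle with heq | hlt
    · exact h.2.2 x y hx hy heq hV
    · have hTx : T.entry y = i ∧ T.entry x = i - 1 := by split_ifs at hT <;> omega
      exact hc.2.2 y x hy hx hTx.1 hTx.2

lemma chainInv_rtg {V T : GenomicTableau lam} (h : Relation.ReflTransGen RegStep V T) :
    ChainInv V T := by
  induction h with
  | refl => exact chainInv_refl V
  | tail _ s ih => exact chainInv_step ih s

lemma chainInv_merged_of {T U : GenomicTableau lam} {j : ℕ} (hinv : ChainInv T U)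
    (hc : mergeCond T j)
    (hU2 : ∀ x y, InShape lam x → InShape lam y → T.entry x = j → T.entry y = j - 1 →
      U.entry x = U.entry y) : ChainInv (merged T j hc) U := by
  have h2 := hc.1
  refine ⟨fun x y => Iff.rfl.trans (hinv.1 x y), ?_, ?_⟩
  · intro x y hx hy h'
    simp only [merged_entry] at h'
    by_cases hle : T.entry x ≤ T.entry y
    · exact hinv.2.1 x y hx hy hle
    · have hxy : T.entry x = j ∧ T.entry y = j - 1 := by split_ifs at h' <;> omega
      exact le_of_eq (hU2 x y hx hy hxy.1 hxy.2)
  · intro x y hx hy hUeq h'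
    simp only [merged_entry] at h'
    have hlt : T.entry x < T.entry y := by split_ifs at h' <;> omega
    exact hinv.2.2 x y hx hy hUeq hlt

lemma used_down_chain {T : GenomicTableau lam}
    (hdc : ∀ j, 2 ≤ j → (∃ x, InShape lam x ∧ T.entry x = j) →
      ∃ y, InShape lam y ∧ T.entry y = j - 1) :
    ∀ d m k, k + d = m → 1 ≤ k → (∃ x, InShape lam x ∧ T.entry x = m) →
      ∃ x, InShape lam x ∧ T.entry x = k := by
  intro d
  induction d with
  | zero => intro m k hk _ hm; rw [show k = m by omega]; exact hm
  | succ d ihd =>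
    intro m k hk h1 hm
    have hk1 := ihd m (k + 1) (by omega) (by omega) hm
    obtain ⟨y, hy, hey⟩ := hdc (k + 1) (by omega) hk1
    exact ⟨y, hy, by omega⟩

lemma rtg_of_chainInv (hf : {x : ℕ × ℕ | InShape lam x}.Finite) {U : GenomicTableau lam}
    (hU : IsQY U) :
    ∀ n (T : GenomicTableau lam), mu hf T ≤ n → ChainInv T U →
      Relation.ReflTransGen RegStep T U := by
  intro n
  induction n using Nat.strong_induction_on with
  | _ n ih =>
  intro T hmu hinv
  by_cases hTU : T = U
  · rw [hTU]
  by_cases hgap : ∃ j, 2 ≤ j ∧ (∃ x, InShape lam x ∧ T.entry x = j) ∧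
      ¬∃ y, InShape lam y ∧ T.entry y = j - 1
  · obtain ⟨j, h2, hex, hnot⟩ := hgap
    have hc : mergeCond T j := ⟨h2, hex, fun x y hx hy hex' hey' => absurd ⟨y, hy, hey'⟩ hnot⟩
    have hinv' := chainInv_merged_of hinv hc
      (fun x y hx hy hex' hey' => absurd ⟨y, hy, hey'⟩ hnot)
    have hstep := regStep_merged hc
    exact Relation.ReflTransGen.head hstep
      (ih (mu hf (merged T j hc)) (by have := mu_lt_of_regStep hf hstep; omega) _ le_rfl hinv')
  by_cases hmerge : ∃ j, 2 ≤ j ∧ ∃ x y, InShape lam x ∧ InShape lam y ∧ T.entry x = j ∧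
      T.entry y = j - 1 ∧ U.entry x = U.entry y
  · obtain ⟨j, h2, x₀, y₀, hx₀, hy₀, hex₀, hey₀, hU₀⟩ := hmerge
    have hall : ∀ x y, InShape lam x → InShape lam y → T.entry x = j → T.entry y = j - 1 →
        U.entry x = U.entry y := by
      intro x y hx hy hex hey
      have e1 : U.entry x = U.entry x₀ :=
        le_antisymm (hinv.2.1 x x₀ hx hx₀ (by omega)) (hinv.2.1 x₀ x hx₀ hx (by omega))
      have e2 : U.entry y = U.entry y₀ :=
        le_antisymm (hinv.2.1 y y₀ hy hy₀ (by omega)) (hinv.2.1 y₀ y hy₀ hy (by omega))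
      omega
    have hc : mergeCond T j := by
      refine ⟨h2, ⟨x₀, hx₀, hex₀⟩, ?_⟩
      intro x y hx hy hex hey
      exact hinv.2.2 y x hy hx (hall x y hx hy hex hey).symm (by omega)
    have hinv' := chainInv_merged_of hinv hc hall
    have hstep := regStep_merged hc
    exact Relation.ReflTransGen.head hstep
      (ih (mu hf (merged T j hc)) (by have := mu_lt_of_regStep hf hstep; omega) _ le_rfl hinv')
  -- remaining case : T = U
  exfalso
  apply hTU
  push_neg at hgap hmerge
  have hdc : ∀ j, 2 ≤ j → (∃ x, InShape lam x ∧ T.entry x = j) →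
      ∃ y, InShape lam y ∧ T.entry y = j - 1 := fun j h2 hj => hgap j h2 hj
  have claim1 : ∀ e x, InShape lam x → T.entry x = e → e ≤ U.entry x := by
    intro e
    induction e using Nat.strong_induction_on with
    | _ e ihe =>
    intro x hx hex
    have hpos := T.entry_pos x hx
    have hposU := U.entry_pos x hx
    by_cases h1 : e ≤ 1
    · omega
    · obtain ⟨y, hy, hey⟩ := hdc e (by omega) ⟨x, hx, hex⟩
      have hIH := ihe (e - 1) (by omega) y hy hey
      have hle := hinv.2.1 y x hy hx (by omega)
      have hne := hmerge e (by omega) x y hx hy hex hey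
      omega
  have claim2 : ∀ i x, InShape lam x → U.entry x = i → i ≤ T.entry x := by
    intro i
    induction i using Nat.strong_induction_on with
    | _ i ihi =>
    intro x hx hUx
    have hpos := T.entry_pos x hx
    by_cases h1 : i ≤ 1
    · omega
    · obtain ⟨a, b, ha, hb, hea, heb, hab⟩ := hU i (by omega) ⟨x, hx, hUx⟩
      have hIHb := ihi (i - 1) (by omega) b hb heb
      have hTab : T.entry b < T.entry a := by
        by_contra hcon
        push_neg at hcon
        have := hinv.2.1 a b ha hb hcon
        omega
      -- show T.entry x = T.entry a
      have hTxa : T.entry x = T.entry a := by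
        by_contra hne
        rcases lt_or_gt_of_ne hne with hlt | hgt
        · -- T.entry x < T.entry a
          obtain ⟨y', hy', hey'⟩ := used_down_chain hdc (T.entry a - (T.entry x + 1))
            (T.entry a) (T.entry x + 1) (by omega) (by omega) ⟨a, ha, rfl⟩
          have e1 := hinv.2.1 x y' hx hy' (by omega)
          have e2 := hinv.2.1 y' a hy' ha (by omega)
          have hne2 := hmerge (T.entry x + 1) (by omega) y' x hy' hx hey' (by omega)
          omega
        · -- T.entry a < T.entry x
          obtain ⟨y', hy', hey'⟩ := used_down_chain hdc (T.entry x - (T.entry a + 1))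
            (T.entry x) (T.entry a + 1) (by omega) (by omega) ⟨x, hx, rfl⟩
          have e1 := hinv.2.1 a y' ha hy' (by omega)
          have e2 := hinv.2.1 y' x hy' hx (by omega)
          have hne2 := hmerge (T.entry a + 1) (by omega) y' a hy' ha hey' (by omega)
          omega
      omega
  apply gt_ext
  · intro x
    by_cases hx : InShape lam x
    · exact le_antisymm (claim1 (T.entry x) x hx rfl) (claim2 (U.entry x) x hx rfl)
    · rw [T.entry_zero x hx, U.entry_zero x hx]
  · exact hinv.1

end Invariants
section Lists

def psMem (l : List ℕ) (v : ℕ) : Prop := ∃ k, (l.take k).sum = v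

lemma sum_take_le_sum_take {l : List ℕ} {k k' : ℕ} (h : k ≤ k') :
    (l.take k).sum ≤ (l.take k').sum := by
  have : l.take k' = l.take k ++ (l.drop k).take (k' - k) := by
    rw [← List.take_add, show k + (k' - k) = k' by omega]
  rw [this, List.sum_append]
  omega

lemma sum_take_le_sum (l : List ℕ) (k : ℕ) : (l.take k).sum ≤ l.sum := by
  conv_rhs => rw [← List.take_append_drop k l]
  rw [List.sum_append]
  omega

lemma nil_of_sum_zero {l : List ℕ} (hl : ∀ b ∈ l, 0 < b) (h : l.sum = 0) : l = [] := by
  cases l with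
  | nil => rfl
  | cons b t => have := hl b (List.mem_cons_self); simp [List.sum_cons] at h; omega

lemma refines_of_ps {α : List ℕ} :
    ∀ β : List ℕ, (∀ b ∈ β, 0 < b) → α.sum = β.sum →
      (∀ v, psMem α v → psMem β v) → Refines β α := by
  induction α with
  | nil =>
    intro β hβ hsum _
    have : β = [] := nil_of_sum_zero hβ (by simpa using hsum.symm)
    exact ⟨[], by simp [this], rfl⟩
  | cons a α' ihα =>
    intro β hβ hsum hps
    obtain ⟨k, hk⟩ := hps a ⟨1, by simp⟩
    have hsplit : β = β.take k ++ β.drop k := (List.take_append_drop k β).symm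
    have hsum2 : α'.sum = (β.drop k).sum := by
      have : β.sum = (β.take k).sum + (β.drop k).sum := by
        conv_lhs => rw [hsplit]
        rw [List.sum_append]
      simp only [List.sum_cons] at hsum
      omega
    have hps2 : ∀ v, psMem α' v → psMem (β.drop k) v := by
      intro v ⟨k₁, hk₁⟩
      have hmem : psMem (a :: α') (a + v) := ⟨k₁ + 1, by simp [List.take_cons, hk₁]⟩
      obtain ⟨k'', hk''⟩ := hps _ hmem
      rcases le_or_gt k'' k with hle | hlt
      · have : (β.take k'').sum ≤ a := hk ▸ sum_take_le_sum_take hle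
        have hv : v = 0 := by omega
        exact ⟨0, by simp [hv]⟩
      · refine ⟨k'' - k, ?_⟩
        have : β.take k'' = β.take k ++ (β.drop k).take (k'' - k) := by
          rw [← List.take_add, show k + (k'' - k) = k'' by omega]
        rw [this, List.sum_append, hk] at hk''
        omega
    obtain ⟨L', hfl, hmap⟩ := ihα (β.drop k) (fun b hb => hβ b (List.mem_of_mem_drop hb))
      hsum2 hps2
    exact ⟨β.take k :: L', by simp [hfl], by simp [hmap, hk]⟩

lemma sum_of_refines {β α : List ℕ} (h : Refines β α) : β.sum = α.sum := by
  obtain ⟨L, hfl, hmap⟩ := h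
  rw [← hfl, ← hmap, List.sum_flatten]

lemma ps_of_refines {β α : List ℕ} (h : Refines β α) : ∀ v, psMem α v → psMem β v := by
  obtain ⟨L, hfl, hmap⟩ := h
  rintro v ⟨i, rfl⟩
  refine ⟨(L.take i).flatten.length, ?_⟩
  have h1 : β = (L.take i).flatten ++ (L.drop i).flatten := by
    rw [← List.flatten_append, List.take_append_drop, hfl]
  rw [h1, List.take_left, List.sum_flatten, ← hmap, List.map_take]

lemma ss_eq : ∀ (l₁ l₂ : List ℕ), l₁.Pairwise (· < ·) → l₂.Pairwise (· < ·) →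
    (∀ x, x ∈ l₁ ↔ x ∈ l₂) → l₁ = l₂ := by
  intro l₁
  induction l₁ with
  | nil =>
    intro l₂ _ _ hmem
    cases l₂ with
    | nil => rfl
    | cons b t => exact absurd ((hmem b).2 (List.mem_cons_self)) (List.not_mem_nil)
  | cons a t₁ ih =>
    intro l₂ h₁ h₂ hmem
    cases l₂ with
    | nil => exact absurd ((hmem a).1 (List.mem_cons_self)) (List.not_mem_nil)
    | cons b t₂ =>
      have hab : a = b := by
        have ha : a ∈ b :: t₂ := (hmem a).1 (List.mem_cons_self)
        have hb : b ∈ a :: t₁ := (hmem b).2 (List.mem_cons_self)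
        rcases List.mem_cons.1 ha with h | h
        · exact h
        · rcases List.mem_cons.1 hb with h' | h'
          · exact h'.symm
          · have := (List.pairwise_cons.1 h₂).1 a h
            have := (List.pairwise_cons.1 h₁).1 b h'
            omega
      subst hab
      congr 1
      apply ih t₂ (List.pairwise_cons.1 h₁).2 (List.pairwise_cons.1 h₂).2
      intro x
      constructor
      · intro hx
        have := (List.pairwise_cons.1 h₁).1 x hx
        rcases List.mem_cons.1 ((hmem x).1 (List.mem_cons_of_mem a hx)) with h | h
        · omega
        · exact h
      · intro hx
        have := (List.pairwise_cons.1 h₂).1 x hx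
        rcases List.mem_cons.1 ((hmem x).2 (List.mem_cons_of_mem a hx)) with h | h
        · omega
        · exact h

lemma filter_take_of_sorted : ∀ (l : List ℕ), l.Pairwise (· < ·) → ∀ c : ℕ,
    ∃ b, l.take b = l.filter (fun y => decide (y < c)) := by
  intro l
  induction l with
  | nil => intro _ c; exact ⟨0, rfl⟩
  | cons a t ih =>
    intro h c
    by_cases hac : a < c
    · obtain ⟨b, hb⟩ := ih (List.pairwise_cons.1 h).2 c
      exact ⟨b + 1, by simp [List.take_cons, List.filter_cons, hac, hb]⟩
    · refine ⟨0, ?_⟩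
      rw [List.take_zero]
      symm
      rw [List.filter_eq_nil_iff]
      intro y hy
      rcases List.mem_cons.1 hy with rfl | hy'
      · simpa using hac
      · have := (List.pairwise_cons.1 h).1 y hy'
        simp only [decide_eq_true_eq]
        omega

lemma take_eq_filter_of_sorted : ∀ (l : List ℕ), l.Pairwise (· < ·) → ∀ b : ℕ,
    ∃ c, l.take b = l.filter (fun y => decide (y < c)) := by
  intro l
  induction l with
  | nil => intro _ b; exact ⟨0, by simp⟩
  | cons a t ih =>
    intro h b
    cases b with
    | zero =>
      refine ⟨0, ?_⟩
      rw [List.take_zero]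
      symm
      rw [List.filter_eq_nil_iff]
      intro y _
      simp
    | succ b' =>
      obtain ⟨c, hc⟩ := ih (List.pairwise_cons.1 h).2 b'
      refine ⟨max c (a + 1), ?_⟩
      have hfc : t.filter (fun y => decide (y < c)) = t.filter (fun y => decide (y < max c (a+1))) := by
        rcases le_or_gt (a + 1) c with hle | hlt
        · rw [max_eq_left (by omega)]
        · have h1 : t.filter (fun y => decide (y < c)) = [] := by
            rw [List.filter_eq_nil_iff]
            intro y hy
            have := (List.pairwise_cons.1 h).1 y hy
            simp only [decide_eq_true_eq]
            omega
          have h2 : t.filter (fun y => decide (y < max c (a+1))) = [] := by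
            rw [List.filter_eq_nil_iff]
            intro y hy
            have := (List.pairwise_cons.1 h).1 y hy
            simp only [decide_eq_true_eq]
            omega
          rw [h1, h2]
      rw [List.take_succ_cons, List.filter_cons_of_pos (by simp only [decide_eq_true_eq]; omega)]
      rw [hc, hfc]

end Lists
section SmfSec

noncomputable def smf (m : ℕ →₀ ℕ) (c : ℕ) : ℕ := ((List.range c).map m).sum

lemma smf_succ (m : ℕ →₀ ℕ) (n : ℕ) : smf m (n + 1) = smf m n + m n := by
  unfold smf
  rw [List.range_succ]
  simp

lemma smf_mono {m : ℕ →₀ ℕ} {c c' : ℕ} (h : c ≤ c') : smf m c ≤ smf m c' := by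
  unfold smf
  have h1 : (List.range c).map m = ((List.range c').map m).take c := by
    rw [← List.map_take, List.take_range, min_eq_left h]
  rw [h1]
  exact sum_take_le_sum _ _

lemma sum_map_filter_support (m : ℕ →₀ ℕ) (p : ℕ → Bool) :
    ∀ l : List ℕ, (∀ x ∈ l, p x = false → m x = 0) →
      ((l.filter p).map m).sum = (l.map m).sum := by
  intro l
  induction l with
  | nil => intro _; rfl
  | cons a t ih =>
    intro h
    by_cases hp : p a = true
    · rw [List.filter_cons_of_pos hp]
      simp only [List.map_cons, List.sum_cons]
      rw [ih (fun x hx => h x (List.mem_cons_of_mem a hx))]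
    · have hp' : p a = false := by simpa using hp
      rw [List.filter_cons_of_neg (by simp [hp'])]
      simp only [List.map_cons, List.sum_cons]
      rw [ih (fun x hx => h x (List.mem_cons_of_mem a hx)), h a (List.mem_cons_self) hp']
      omega

lemma filter_sort_support_eq (m : ℕ →₀ ℕ) (c : ℕ) :
    (m.support.sort (· ≤ ·)).filter (fun y => decide (y < c)) =
      (List.range c).filter (fun y => decide (y ∈ m.support)) := by
  apply ss_eq
  · exact List.Pairwise.sublist (List.filter_sublist) ((Finset.sortedLT_sort m.support).pairwise)
  · exact List.Pairwise.sublist (List.filter_sublist) (List.pairwise_lt_range)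
  · intro x
    simp only [List.mem_filter, Finset.mem_sort, List.mem_range, decide_eq_true_eq]
    tauto

lemma sum_filter_lt_eq_smf (m : ℕ →₀ ℕ) (c : ℕ) :
    ((((m.support.sort (· ≤ ·)).filter (fun y => decide (y < c)))).map m).sum = smf m c := by
  rw [filter_sort_support_eq]
  exact sum_map_filter_support m _ (List.range c) (fun x _ hx => by
    simpa [Finsupp.notMem_support_iff] using hx)

lemma smf_mem_ps (m : ℕ →₀ ℕ) (c : ℕ) : psMem (posPart m) (smf m c) := by
  obtain ⟨b, hb⟩ := filter_take_of_sorted _ ((Finset.sortedLT_sort m.support).pairwise) c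
  refine ⟨b, ?_⟩
  unfold _root_.posPart
  rw [← List.map_take, hb, sum_filter_lt_eq_smf]

lemma sum_take_posPart (m : ℕ →₀ ℕ) (b : ℕ) : ∃ c, ((posPart m).take b).sum = smf m c := by
  obtain ⟨c, hc⟩ := take_eq_filter_of_sorted _ ((Finset.sortedLT_sort m.support).pairwise) b
  refine ⟨c, ?_⟩
  unfold _root_.posPart
  rw [← List.map_take, hc, sum_filter_lt_eq_smf]

lemma smf_le_total (m : ℕ →₀ ℕ) (c : ℕ) : smf m c ≤ (posPart m).sum := by
  obtain ⟨b, hb⟩ := filter_take_of_sorted _ ((Finset.sortedLT_sort m.support).pairwise) c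
  have : smf m c = ((posPart m).take b).sum := by
    unfold _root_.posPart
    rw [← List.map_take, hb, sum_filter_lt_eq_smf]
  rw [this]
  exact sum_take_le_sum _ _

lemma total_eq_smf (m : ℕ →₀ ℕ) : ∃ c, (posPart m).sum = smf m c := by
  obtain ⟨c, hc⟩ := sum_take_posPart m (posPart m).length
  exact ⟨c, by rwa [List.take_length] at hc⟩

lemma posPart_entries_pos (m : ℕ →₀ ℕ) : ∀ a ∈ posPart m, 0 < a := by
  intro a ha
  obtain ⟨i, hi, rfl⟩ := List.mem_map.1 ha
  rw [Finset.mem_sort, Finsupp.mem_support_iff] at hi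
  omega

end SmfSec

section WtPos
variable {lam : ℕ → ℕ} {U : GenomicTableau lam}

lemma wtPos_eq (hf : {x : ℕ × ℕ | InShape lam x}.Finite) (hU : IsQY U) :
    wtPos U = (List.range (maxEntry U)).map (wt U) := by
  unfold wtPos
  apply List.filter_eq_self.mpr
  intro a ha
  obtain ⟨i, hi, rfl⟩ := List.mem_map.1 ha
  rw [List.mem_range] at hi
  simpa using wt_pos_of_QY hf hU hi

lemma wtPos_pos_entries (U : GenomicTableau lam) : ∀ a ∈ wtPos U, 0 < a := by
  intro a ha
  unfold wtPos at ha
  have := List.of_mem_filter ha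
  simpa using this

lemma ps_wtPos (hf : {x : ℕ × ℕ | InShape lam x}.Finite) (hU : IsQY U) :
    ∀ v, psMem (wtPos U) v → ∃ i, v = countLe U i := by
  rintro v ⟨k, rfl⟩
  rw [wtPos_eq hf hU]
  refine ⟨min k (maxEntry U), ?_⟩
  rw [← List.map_take, List.take_range, sum_range_wt hf]

lemma countLe_mem_ps_wtPos (hf : {x : ℕ × ℕ | InShape lam x}.Finite) (hU : IsQY U)
    {i : ℕ} (hi : i ≤ maxEntry U) : psMem (wtPos U) (countLe U i) := by
  refine ⟨i, ?_⟩
  rw [wtPos_eq hf hU, ← List.map_take, List.take_range, min_eq_left hi, sum_range_wt hf]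

lemma wtPos_sum (hf : {x : ℕ × ℕ | InShape lam x}.Finite) (hU : IsQY U) :
    (wtPos U).sum = nGenes U := by
  rw [wtPos_eq hf hU, sum_range_wt hf, countLe_maxEntry hf]

lemma countLe_mono {T : GenomicTableau lam} (hf : {x : ℕ × ℕ | InShape lam x}.Finite)
    {i j : ℕ} (h : i ≤ j) : countLe T i ≤ countLe T j := by
  apply Set.ncard_le_ncard _ ((leaders_finite hf).subset fun y hy => hy.1)
  rintro w ⟨hw, hwe⟩
  exact ⟨hw, by omega⟩

lemma countLe_le_nGenes {T : GenomicTableau lam} (hf : {x : ℕ × ℕ | InShape lam x}.Finite)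
    (i : ℕ) : countLe T i ≤ nGenes T :=
  Set.ncard_le_ncard (fun w hw => hw.1) (leaders_finite hf)

end WtPos
section Construct
variable {lam : ℕ → ℕ}

lemma smf_zero (m : ℕ →₀ ℕ) : smf m 0 = 0 := by simp [smf]

lemma leader_iff_of_geneIff {T T' : GenomicTableau lam}
    (h : ∀ x y, T.sameGene x y ↔ T'.sameGene x y) (x : ℕ × ℕ) :
    IsGeneLeader T x ↔ IsGeneLeader T' x := by
  unfold IsGeneLeader
  constructor
  · rintro ⟨h1, h2⟩; exact ⟨h1, fun y hy => h2 y ((h x y).2 hy)⟩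
  · rintro ⟨h1, h2⟩; exact ⟨h1, fun y hy => h2 y ((h x y).1 hy)⟩

lemma kStd_row_mono {U : GenomicTableau lam} (hf : {x : ℕ × ℕ | InShape lam x}.Finite)
    {r c₁ c₂ : ℕ} (hc : c₁ ≤ c₂) (hsh2 : InShape lam (r, c₂))
    (he : U.entry (r, c₁) = U.entry (r, c₂)) : kStd U (r, c₁) ≤ kStd U (r, c₂) := by
  have hsh1 : InShape lam (r, c₁) := lt_of_le_of_lt hc hsh2
  rcases eq_or_lt_of_le hc with rfl | hlt
  · exact le_rfl
  have hg : ¬ U.sameGene (r, c₁) (r, c₂) := by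
    intro hcon
    have := U.sameGene_row _ _ hcon rfl
    simp only [Prod.mk.injEq] at this
    omega
  have hl1 : leadCol U (r, c₁) ≤ c₁ := leadCol_le_self U hsh1
  have hl2 : c₁ < leadCol U (r, c₂) := by
    by_contra hcon
    push_neg at hcon
    obtain ⟨wy, hgy, hwy, hwyc⟩ := exists_leader U hsh2
    have hwc : wy.2 ≤ c₁ := by omega
    have hewy : U.entry wy = U.entry (r, c₁) := by
      rw [← U.sameGene_entry _ _ hgy, he]
    rcases eq_or_lt_of_le hwc with heq | hltw
    · have : wy = (r, c₁) := same_col_entry_eq U hwy.1 hsh1 heq hewy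
      exact hg (U.sameGene_symm _ _ (this ▸ hgy))
    · have hint := U.sameGene_interval wy (r, c₁) (r, c₂) (U.sameGene_symm _ _ hgy) hsh1
        (by rw [hewy]) hltw hlt
      exact hg (U.sameGene_trans _ _ _ (U.sameGene_symm _ _ hint) (U.sameGene_symm _ _ hgy))
  exact le_of_lt (kStd_lt_of_leadCol_lt hsh1 hsh2 he (by omega) hf)

lemma exists_Vm (hlam : IsPartitionFn lam)
    (hf : {x : ℕ × ℕ | InShape lam x}.Finite) {U : GenomicTableau lam} (hU : IsQY U)
    (m : ℕ →₀ ℕ) (hre : Refines (posPart m) (wtPos U)) :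
    ∃ V : GenomicTableau lam,
      (∀ x y, V.sameGene x y ↔ U.sameGene x y) ∧ (∀ n, wt V n = m n) ∧
      (∀ x, V.entry x = if InShape lam x then sInf {j | 1 ≤ j ∧ kStd U x ≤ smf m j} else 0) ∧
      Relation.ReflTransGen RegStep V U := by
  have htot : (posPart m).sum = nGenes U := by rw [sum_of_refines hre, wtPos_sum hf hU]
  set f : (ℕ × ℕ) → ℕ :=
    fun x => if InShape lam x then sInf {j | 1 ≤ j ∧ kStd U x ≤ smf m j} else 0 with hfdef
  obtain ⟨c₀, hc₀⟩ := total_eq_smf m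
  have hSne : ∀ x, InShape lam x → {j | 1 ≤ j ∧ kStd U x ≤ smf m j}.Nonempty := by
    intro x hx
    have h1 : kStd U x ≤ smf m c₀ := by
      rw [← hc₀, htot]; exact kStd_le_nGenes hf hx
    exact ⟨max c₀ 1, le_max_right _ _, le_trans h1 (smf_mono (le_max_left _ _))⟩
  have hfx : ∀ x, InShape lam x → f x = sInf {j | 1 ≤ j ∧ kStd U x ≤ smf m j} :=
    fun x hx => if_pos hx
  have hmem : ∀ x, InShape lam x → 1 ≤ f x ∧ kStd U x ≤ smf m (f x) := by
    intro x hx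
    have := Nat.sInf_mem (hSne x hx)
    rw [← hfx x hx] at this
    exact this
  have hmin : ∀ x, InShape lam x → ∀ j, 1 ≤ j → kStd U x ≤ smf m j → f x ≤ j := by
    intro x hx j h1 h2
    rw [hfx x hx]
    exact Nat.sInf_le ⟨h1, h2⟩
  have hlow : ∀ x, InShape lam x → ∀ j, j < f x → smf m j < kStd U x := by
    intro x hx j hj
    by_contra hcon
    push_neg at hcon
    rcases Nat.eq_zero_or_pos j with rfl | hpos
    · have := kStd_pos (T := U) hf hx
      rw [smf_zero] at hcon
      omega
    · have := hmin x hx j hpos hcon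
      omega
  have hmono : ∀ x y, InShape lam x → InShape lam y → kStd U x ≤ kStd U y → f x ≤ f y := by
    intro x y hx hy h
    exact hmin x hx (f y) (hmem y hy).1 (le_trans h (hmem y hy).2)
  have hstrict : ∀ x y, InShape lam x → InShape lam y → U.entry x < U.entry y → f x < f y := by
    intro x y hx hy hxy
    obtain ⟨c, hc⟩ : ∃ c, countLe U (U.entry x) = smf m c := by
      obtain ⟨b, hb⟩ := ps_of_refines hre _ (countLe_mem_ps_wtPos hf hU (entry_le_maxEntry hf hx))
      obtain ⟨c, hc⟩ := sum_take_posPart m b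
      exact ⟨c, by rw [← hb, hc]⟩
    have hA : kStd U x ≤ smf m c := hc ▸ kStd_le_countLe hf hx
    have hcpos : 1 ≤ c := by
      by_contra hcon
      push_neg at hcon
      interval_cases c
      rw [smf_zero] at hA
      have := kStd_pos (T := U) hf hx
      omega
    have h1 : f x ≤ c := hmin x hx c hcpos hA
    have hB : smf m c < kStd U y := by
      have e1 : countLe U (U.entry x) ≤ countLe U (U.entry y - 1) := countLe_mono hf (by omega)
      have e2 := countLe_pred_lt_kStd (T := U) hf hy
      omega
    have h2 : c < f y := by
      by_contra hcon
      push_neg at hcon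
      have e1 := (hmem y hy).2
      have e2 := smf_mono (m := m) hcon
      omega
    omega
  refine ⟨⟨f, U.sameGene, ?_, ?_, ?_, ?_, U.sameGene_mem, U.sameGene_refl, U.sameGene_symm,
    U.sameGene_trans, ?_, ?_, U.sameGene_row⟩, fun x y => Iff.rfl, ?_, fun x => rfl, ?_⟩
  · exact fun x hx => (hmem x hx).1
  · intro x hx
    simp only [hfdef, if_neg hx]
  · -- row_weak
    intro r c₁ c₂ hc hsh2
    have hsh1 : InShape lam (r, c₁) := lt_of_le_of_lt hc hsh2
    have he := U.row_weak r c₁ c₂ hc hsh2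
    rcases eq_or_lt_of_le he with heq | hlt
    · exact hmono _ _ hsh1 hsh2 (kStd_row_mono hf hc hsh2 heq)
    · exact le_of_lt (hstrict _ _ hsh1 hsh2 hlt)
  · -- col_strict
    intro r₁ r₂ c h12 hsh2
    have hsh1 : InShape lam (r₁, c) := lt_of_lt_of_le hsh2 (hlam.1 (le_of_lt h12))
    exact hstrict _ _ hsh1 hsh2 (U.col_strict r₁ r₂ c h12 hsh2)
  · -- sameGene_entry
    intro x y hxy
    obtain ⟨hx, hy⟩ := U.sameGene_mem x y hxy
    simp only [hfdef, if_pos hx, if_pos hy, kStd_eq_of_sameGene hxy]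
  · -- sameGene_interval
    intro x y z hxz hy hey hxy hyz
    obtain ⟨hx, hz⟩ := U.sameGene_mem x z hxz
    have hUxy : U.entry y = U.entry x := by
      by_contra hne
      rcases lt_or_gt_of_ne hne with hlt | hgt
      · have := hstrict y x hy hx hlt; omega
      · have := hstrict x y hx hy hgt; omega
    exact U.sameGene_interval x y z hxz hy hUxy hxy hyz
  · -- weights
    intro n
    show {x | IsGeneLeader U x ∧ f x = n + 1}.ncard = m n
    have hset : {x | IsGeneLeader U x ∧ f x = n + 1} =
        {w | IsGeneLeader U w ∧ smf m n < kStd U w ∧ kStd U w ≤ smf m (n + 1)} := by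
      ext w
      simp only [Set.mem_setOf_eq]
      constructor
      · rintro ⟨hl, hev⟩
        exact ⟨hl, hlow w hl.1 n (by omega), hev ▸ (hmem w hl.1).2⟩
      · rintro ⟨hl, h1, h2⟩
        refine ⟨hl, ?_⟩
        have e1 : f w ≤ n + 1 := hmin w hl.1 (n + 1) (by omega) h2
        have e2 : n < f w := by
          by_contra hcon
          push_neg at hcon
          have := le_trans (hmem w hl.1).2 (smf_mono (m := m) hcon)
          omega
        omega
    rw [hset, card_kStd_Ioc hf _ _ (by rw [← htot]; exact smf_le_total m _), smf_succ]
    omega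
  · -- reaches U
    apply rtg_of_chainInv hf hU (mu hf _) _ le_rfl
    refine ⟨fun x y => Iff.rfl, ?_, ?_⟩
    · intro x y hx hy h
      by_contra hcon
      push_neg at hcon
      have := hstrict y x hy hx hcon
      have hfx' : f x ≤ f y := h
      omega
    · intro x y hx hy hUeq hVlt
      have hk : kStd U x < kStd U y := by
        by_contra hcon
        push_neg at hcon
        have := hmono y x hy hx hcon
        have hfx' : (f x : ℕ) < f y := hVlt
        omega
      have hg : ¬ U.sameGene x y := fun hcon => by
        rw [kStd_eq_of_sameGene hcon] at hk; omega
      have hlc : leadCol U x < leadCol U y := by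
        by_contra hcon
        push_neg at hcon
        have := kStd_le_of_leadCol_le hy hx hUeq.symm hcon hf
        omega
      exact col_lt_of_leadCol_lt hf hx hy hUeq hg hlc

end Construct
section Fiber
variable {lam : ℕ → ℕ}

lemma fiber_elem_spec (hf : {x : ℕ × ℕ | InShape lam x}.Finite) {U V : GenomicTableau lam}
    (hU : IsQY U) (hrtg : Relation.ReflTransGen RegStep V U) (m : ℕ →₀ ℕ)
    (hwt : ∀ n, wt V n = m n) :
    Refines (posPart m) (wtPos U) ∧
      (∀ x, V.entry x = if InShape lam x then sInf {j | 1 ≤ j ∧ kStd U x ≤ smf m j} else 0) ∧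
      (∀ x y, V.sameGene x y ↔ U.sameGene x y) := by
  have hinv := chainInv_rtg hrtg
  have hgene := hinv.1
  have hld : ∀ x, IsGeneLeader V x ↔ IsGeneLeader U x := leader_iff_of_geneIff hgene
  have hldset : {w | IsGeneLeader V w} = {w | IsGeneLeader U w} := Set.ext fun w => hld w
  have hnG : nGenes V = nGenes U := by unfold nGenes; rw [hldset]
  have hcnt : ∀ j, countLe V j = smf m j := by
    intro j
    rw [← sum_range_wt hf]
    unfold smf
    congr 1
    apply List.map_congr_left
    intro a _
    exact hwt a
  have claimA : ∀ x, InShape lam x → kStd U x ≤ countLe V (V.entry x) := by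
    intro x hx
    rw [kStd_eq_ncard hx]
    apply Set.ncard_le_ncard _ ((leaders_finite hf).subset fun w hw => hw.1)
    rintro y ⟨hyl, hcase⟩
    refine ⟨(hld y).2 hyl, ?_⟩
    rcases hcase with hlt | ⟨heq, hcol⟩
    · by_contra hcon
      push_neg at hcon
      have := hinv.2.1 x y hx hyl.1 (le_of_lt hcon)
      omega
    · by_contra hcon
      push_neg at hcon
      have h1 := hinv.2.2 x y hx hyl.1 heq.symm hcon
      have h2 := leadCol_le_self U hx
      omega
  have claimB : ∀ x, InShape lam x → ∀ j, j < V.entry x → countLe V j < kStd U x := by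
    intro x hx j hj
    obtain ⟨wx, hgx, hwx, hwxc⟩ := exists_leader U hx
    have hVwxx : V.entry wx = V.entry x :=
      (V.sameGene_entry x wx ((hgene x wx).2 hgx)).symm
    rw [kStd_eq_ncard hx]
    apply Set.ncard_lt_ncard _ (kSet_finite hf x)
    constructor
    · rintro w ⟨hwl, hwe⟩
      have hwlU := (hld w).1 hwl
      refine ⟨hwlU, ?_⟩
      have hVwx : V.entry w < V.entry x := by omega
      have hUle : U.entry w ≤ U.entry x := hinv.2.1 w x hwlU.1 hx (le_of_lt hVwx)
      rcases eq_or_lt_of_le hUle with heq | hlt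
      · right
        refine ⟨heq, ?_⟩
        have hVwwx : V.entry w < V.entry wx := by omega
        have hUwwx : U.entry w = U.entry wx := by rw [heq, U.sameGene_entry x wx hgx]
        have := hinv.2.2 w wx hwlU.1 hwx.1 hUwwx hVwwx
        omega
      · exact Or.inl hlt
    · intro hsub
      obtain ⟨-, h3⟩ := hsub (own_leader_mem_kSet hgx hwx hwxc)
      omega
  have hent : ∀ x, V.entry x =
      if InShape lam x then sInf {j | 1 ≤ j ∧ kStd U x ≤ smf m j} else 0 := by
    intro x
    by_cases hx : InShape lam x
    · rw [if_pos hx]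
      have hVpos := V.entry_pos x hx
      have h1 : V.entry x ∈ {j | 1 ≤ j ∧ kStd U x ≤ smf m j} :=
        ⟨hVpos, by rw [← hcnt]; exact claimA x hx⟩
      apply le_antisymm _ (Nat.sInf_le h1)
      by_contra hcon
      push_neg at hcon
      obtain ⟨h4, h5⟩ := Nat.sInf_mem (Set.nonempty_of_mem h1)
      have h6 := claimB x hx _ hcon
      rw [hcnt] at h6
      omega
    · rw [if_neg hx, V.entry_zero x hx]
  have hps : ∀ v, psMem (wtPos U) v → psMem (posPart m) v := by
    intro v hv
    obtain ⟨i, rfl⟩ := ps_wtPos hf hU v hv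
    by_cases hSe : {w | IsGeneLeader U w ∧ U.entry w ≤ i}.Nonempty
    · have hfinS : (V.entry '' {w | IsGeneLeader U w ∧ U.entry w ≤ i}).Finite :=
        (((leaders_finite hf).subset (fun w (hw : IsGeneLeader U w ∧ _) =>
          (hld w).2 hw.1)).image _)
      obtain ⟨w₀, hw₀, hj⟩ := Nat.sSup_mem (hSe.image V.entry) hfinS.bddAbove
      have hseteq : {w | IsGeneLeader U w ∧ U.entry w ≤ i} =
          {w | IsGeneLeader V w ∧ V.entry w ≤ sSup (V.entry '' {w | IsGeneLeader U w ∧ U.entry w ≤ i})} := by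
        ext w
        constructor
        · rintro ⟨hwl, hwe⟩
          exact ⟨(hld w).2 hwl, le_csSup hfinS.bddAbove ⟨w, ⟨hwl, hwe⟩, rfl⟩⟩
        · rintro ⟨hwl, hwe⟩
          have h1 : V.entry w ≤ V.entry w₀ := by rw [hj]; exact hwe
          have h2 := hinv.2.1 w w₀ ((hld w).1 hwl).1 hw₀.1.1 h1
          exact ⟨(hld w).1 hwl, le_trans h2 hw₀.2⟩
      have heq2 : countLe U i =
          countLe V (sSup (V.entry '' {w | IsGeneLeader U w ∧ U.entry w ≤ i})) := by
        unfold countLe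
        rw [← hseteq]
      rw [heq2, hcnt]
      exact smf_mem_ps m _
    · have : countLe U i = 0 := by
        unfold countLe
        rw [Set.not_nonempty_iff_eq_empty.1 hSe, Set.ncard_empty]
      rw [this]
      exact ⟨0, by simp⟩
  have hsum : (wtPos U).sum = (posPart m).sum := by
    rw [wtPos_sum hf hU]
    apply le_antisymm
    · rw [← hnG, ← countLe_maxEntry hf, hcnt]
      exact smf_le_total m _
    · obtain ⟨c₀, hc₀⟩ := total_eq_smf m
      rw [hc₀, ← hcnt, ← hnG]
      exact countLe_le_nGenes hf _
  exact ⟨refines_of_ps _ (posPart_entries_pos m) hsum hps, hent, hgene⟩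

end Fiber
/-- **Lemma.** For any quasiYamanouchi genomic tableau `U` of shape `λ`, the generating
function of the regularization fiber over `U` is the fundamental quasisymmetric function
indexed by `wt(U)`:  `Σ_{V ∈ Gen(λ), reg(V) = U} x^{wt(V)} = F_{wt(U)}`. -/
theorem regFiberSeries_eq_fundamental (lam : ℕ → ℕ) (hlam : IsPartitionFn lam)
    (reg : GenomicTableau lam → GenomicTableau lam)
    (hreg : ∀ T, Relation.ReflTransGen RegStep T (reg T) ∧ IsQY (reg T))
    (U : GenomicTableau lam) (hU : IsQY U) :
    regFiberSeries reg U = fundamentalF (wtPos U) := by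
  have hf := shape_finite hlam
  funext m
  show (Nat.card {V : GenomicTableau lam // reg V = U ∧ ∀ n, wt V n = m n} : ℤ) =
    (if Refines (posPart m) (wtPos U) then 1 else 0 : ℤ)
  by_cases hre : Refines (posPart m) (wtPos U)
  · rw [if_pos hre]
    obtain ⟨Vm, hgene, hwt, hent, hrtg⟩ := exists_Vm hlam hf hU m hre
    have hregVm : reg Vm = U := by
      exact (normal_unique hf hrtg (hreg Vm).1 (normal_of_QY hU) (normal_of_QY (hreg Vm).2)).symm
    have hcard : Nat.card {V : GenomicTableau lam // reg V = U ∧ ∀ n, wt V n = m n} = 1 := by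
      rw [Nat.card_eq_one_iff_unique]
      constructor
      · constructor
        rintro ⟨V₁, hV₁, hw₁⟩ ⟨V₂, hV₂, hw₂⟩
        have hr₁ : Relation.ReflTransGen RegStep V₁ U := by rw [← hV₁]; exact (hreg V₁).1
        have hr₂ : Relation.ReflTransGen RegStep V₂ U := by rw [← hV₂]; exact (hreg V₂).1
        have spec₁ := fiber_elem_spec hf hU hr₁ m hw₁
        have spec₂ := fiber_elem_spec hf hU hr₂ m hw₂
        apply Subtype.ext
        apply gt_ext
        · intro x; rw [spec₁.2.1 x, spec₂.2.1 x]
        · intro x y; exact (spec₁.2.2 x y).trans (spec₂.2.2 x y).symm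
      · exact ⟨⟨Vm, hregVm, hwt⟩⟩
    rw [hcard]
    simp
  · rw [if_neg hre]
    have hempty : IsEmpty {V : GenomicTableau lam // reg V = U ∧ ∀ n, wt V n = m n} := by
      constructor
      rintro ⟨V, hV, hw⟩
      have hr : Relation.ReflTransGen RegStep V U := by rw [← hV]; exact (hreg V).1
      exact hre (fiber_elem_spec hf hU hr m hw).1
    rw [Nat.card_of_isEmpty]
    simp
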